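/- (Corollary on the scaled small-gain condition, compound-free form.) Let A ∈ ℝ^{n×n}, B ∈ ℝ^{n×m}, C ∈ ℝ^{q×n}, let Q ∈ ℝ^{n×n} be symmetric positive definite, let η₁ > 0, let γ > 0, let k be an integer with 1 ≤ k ≤ n, and let K ∈ ℝ^{m×q} with ‖K‖₂ ≤ γ (operator norm induced by the Euclidean norms). Define S_γ := QAQ⁻¹ + Q⁻¹AᵀQ + (η₁/k)Iₙ + γ²·QBBᵀQ + Q⁻¹CᵀCQ⁻¹. If tr(VᵀS_γV) ≤ 0 for every k-frame V ∈ ℝ^{n×k}, then, setting J := A − BKC and R := QJQ⁻¹ + Q⁻¹JᵀQ, one has tr(VᵀRV) ≤ −η₁ for every k-frame V. -/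

import Mathlib

open Matrix

/-- A `k`-frame in `ℝⁿ`: a matrix `V ∈ ℝ^{n×k}` with `VᵀV = I_k`. -/
def IsFrame {n k : ℕ} (V : Matrix (Fin n) (Fin k) ℝ) : Prop := Vᵀ * V = 1

/-- The operator norm of a matrix, induced by the Euclidean norms
(i.e. the largest singular value). -/
noncomputable def l2OpNorm {n m : ℕ} (M : Matrix (Fin n) (Fin m) ℝ) : ℝ :=
  ‖LinearMap.toContinuousLinearMap (Matrix.toEuclideanLin M)‖

/-- The trace of a real positive semidefinite matrix is nonnegative. -/
lemma psd_trace_nonneg' {n : ℕ} {M : Matrix (Fin n) (Fin n) ℝ} (h : M.PosSemidef) :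
    0 ≤ M.trace := by
  rw [Matrix.trace]
  apply Finset.sum_nonneg
  intro i _
  have := h.dotProduct_mulVec_nonneg (Pi.single i 1)
  simpa [dotProduct, Matrix.mulVec, Pi.single_apply, Finset.mul_sum] using this

/-- Dot product of a real vector with itself is the square of its Euclidean norm. -/
lemma dot_self_eq_norm_sq' {q : ℕ} (x : Fin q → ℝ) :
    (x ⬝ᵥ x) = ‖(WithLp.equiv 2 (Fin q → ℝ)).symm x‖ ^ 2 := by
  rw [← real_inner_self_eq_norm_sq]
  simp [PiLp.inner_apply, RCLike.inner_apply, dotProduct,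
    mul_comm]
  rw [EuclideanSpace.real_norm_sq_eq]
  simp [sq]

/-- If `‖K‖₂ ≤ γ` then `γ²I − KᵀK` is positive semidefinite. -/
lemma gain_psd' {m q : ℕ} (K : Matrix (Fin m) (Fin q) ℝ) (γ : ℝ)
    (hK : l2OpNorm K ≤ γ) :
    ((γ ^ 2) • (1 : Matrix (Fin q) (Fin q) ℝ) - Kᵀ * K).PosSemidef := by
  rw [Matrix.posSemidef_iff_dotProduct_mulVec]
  constructor
  · simp [Matrix.IsHermitian, Matrix.conjTranspose_eq_transpose_of_trivial,
      Matrix.transpose_sub, Matrix.transpose_smul, Matrix.transpose_mul,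
      Matrix.transpose_transpose]
  · intro x
    have key : (K *ᵥ x) ⬝ᵥ (K *ᵥ x) ≤ γ ^ 2 * (x ⬝ᵥ x) := by
      set f := LinearMap.toContinuousLinearMap (Matrix.toEuclideanLin K) with hf
      set x' : EuclideanSpace ℝ (Fin q) := (WithLp.equiv 2 (Fin q → ℝ)).symm x with hx'
      have h1 : ‖f x'‖ ≤ γ * ‖x'‖ :=
        le_trans (f.le_opNorm x') (mul_le_mul_of_nonneg_right hK (norm_nonneg x'))
      have hfx : f x' = (WithLp.equiv 2 (Fin m → ℝ)).symm (K *ᵥ x) := by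
        simp [hf, hx', Matrix.toEuclideanLin_apply]
      have h2 : (K *ᵥ x) ⬝ᵥ (K *ᵥ x) = ‖f x'‖ ^ 2 := by
        rw [hfx]; exact dot_self_eq_norm_sq' _
      have h3 : (x ⬝ᵥ x) = ‖x'‖ ^ 2 := dot_self_eq_norm_sq' x
      rw [h2, h3]
      calc ‖f x'‖ ^ 2 ≤ (γ * ‖x'‖) ^ 2 := by
            apply sq_le_sq' (by nlinarith [norm_nonneg (f x'), norm_nonneg x']) h1
        _ = γ ^ 2 * ‖x'‖ ^ 2 := by ring
    have expand : star x ⬝ᵥ (((γ ^ 2) • (1 : Matrix (Fin q) (Fin q) ℝ) - Kᵀ * K) *ᵥ x)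
        = γ ^ 2 * (x ⬝ᵥ x) - (K *ᵥ x) ⬝ᵥ (K *ᵥ x) := by
      rw [Matrix.sub_mulVec, dotProduct_sub]
      congr 1
      · simp [Matrix.smul_mulVec, Matrix.one_mulVec, dotProduct_smul]
      · rw [← Matrix.mulVec_mulVec, Matrix.dotProduct_mulVec, Matrix.vecMul_transpose]
        simp
    rw [expand]
    linarith

/-- **Corollary on the scaled small-gain condition, compound-free form.**
If `‖K‖₂ ≤ γ` and the scaled `k`-ARI `tr(Vᵀ S_γ V) ≤ 0` holds for every `k`-frame `V`,
where `S_γ = QAQ⁻¹ + Q⁻¹AᵀQ + (η₁/k)Iₙ + γ²QBBᵀQ + Q⁻¹CᵀCQ⁻¹`, then with `J = A − BKC`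
and `R = QJQ⁻¹ + Q⁻¹JᵀQ` one has `tr(VᵀRV) ≤ −η₁` for every `k`-frame `V`. -/
theorem lurie_k_contraction_small_gain {n m q : ℕ} (k : ℕ) (hk1 : 1 ≤ k) (hkn : k ≤ n)
    (A : Matrix (Fin n) (Fin n) ℝ) (B : Matrix (Fin n) (Fin m) ℝ)
    (C : Matrix (Fin q) (Fin n) ℝ) (Q : Matrix (Fin n) (Fin n) ℝ) (hQ : Q.PosDef)
    (η₁ γ : ℝ) (hη₁ : 0 < η₁) (hγ : 0 < γ)
    (K : Matrix (Fin m) (Fin q) ℝ) (hK : l2OpNorm K ≤ γ)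
    (hARI : ∀ V : Matrix (Fin n) (Fin k) ℝ, IsFrame V →
      (Vᵀ * (Q * A * Q⁻¹ + Q⁻¹ * Aᵀ * Q + (η₁ / k) • (1 : Matrix (Fin n) (Fin n) ℝ)
          + γ ^ 2 • (Q * B * Bᵀ * Q) + Q⁻¹ * Cᵀ * C * Q⁻¹) * V).trace ≤ 0) :
    ∀ V : Matrix (Fin n) (Fin k) ℝ, IsFrame V →
      (Vᵀ * (Q * (A - B * K * C) * Q⁻¹ + Q⁻¹ * (A - B * K * C)ᵀ * Q) * V).trace ≤ -η₁ := by
  intro V hV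
  have hQs : Qᵀ = Q := by
    rw [← Matrix.conjTranspose_eq_transpose_of_trivial]; exact hQ.1
  have hQis : (Q⁻¹)ᵀ = Q⁻¹ := by rw [Matrix.transpose_nonsing_inv, hQs]
  have hγ0 : γ ≠ 0 := hγ.ne'
  set W : Matrix (Fin n) (Fin m) ℝ := γ • (Q * B) + γ⁻¹ • (Q⁻¹ * Cᵀ * Kᵀ) with hW
  set G : Matrix (Fin q) (Fin q) ℝ := (γ ^ 2) • (1 : Matrix (Fin q) (Fin q) ℝ) - Kᵀ * K
    with hG
  set N : Matrix (Fin n) (Fin n) ℝ :=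
    W * Wᵀ + (γ⁻¹ • (Q⁻¹ * Cᵀ)) * G * (γ⁻¹ • (Q⁻¹ * Cᵀ))ᵀ with hN
  -- the key algebraic identity
  have hS : (Q * A * Q⁻¹ + Q⁻¹ * Aᵀ * Q + (η₁ / k) • (1 : Matrix (Fin n) (Fin n) ℝ)
          + γ ^ 2 • (Q * B * Bᵀ * Q) + Q⁻¹ * Cᵀ * C * Q⁻¹)
      = (Q * (A - B * K * C) * Q⁻¹ + Q⁻¹ * (A - B * K * C)ᵀ * Q)
        + (η₁ / k) • (1 : Matrix (Fin n) (Fin n) ℝ) + N := by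
    rw [hN, hW, hG]
    simp only [Matrix.transpose_sub, Matrix.transpose_add, Matrix.transpose_smul,
      Matrix.transpose_mul, Matrix.transpose_transpose, hQs, hQis,
      Matrix.mul_sub, Matrix.sub_mul, Matrix.mul_add, Matrix.add_mul,
      Matrix.smul_mul, Matrix.mul_smul, smul_smul, Matrix.mul_one, Matrix.one_mul,
      Matrix.mul_assoc]
    match_scalars <;> field_simp <;> ring
  -- N is positive semidefinite
  have hNpsd : N.PosSemidef := by
    have h1 : (W * Wᵀ).PosSemidef := by
      rw [← Matrix.conjTranspose_eq_transpose_of_trivial]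
      exact Matrix.posSemidef_self_mul_conjTranspose W
    have hGpsd : G.PosSemidef := gain_psd' K γ hK
    have h2 : ((γ⁻¹ • (Q⁻¹ * Cᵀ)) * G * (γ⁻¹ • (Q⁻¹ * Cᵀ))ᵀ).PosSemidef := by
      rw [← Matrix.conjTranspose_eq_transpose_of_trivial]
      exact hGpsd.mul_mul_conjTranspose_same _
    exact h1.add h2
  -- trace computations
  have hk0 : (k : ℝ) ≠ 0 := Nat.cast_ne_zero.mpr (by omega)
  have hmid : (Vᵀ * ((η₁ / k) • (1 : Matrix (Fin n) (Fin n) ℝ)) * V).trace = η₁ := by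
    rw [Matrix.mul_smul, Matrix.mul_one, Matrix.smul_mul, hV, Matrix.trace_smul,
      Matrix.trace_one]
    simp [div_mul_cancel₀, hk0]
  have hNtr : 0 ≤ (Vᵀ * N * V).trace := by
    apply psd_trace_nonneg'
    rw [← Matrix.conjTranspose_eq_transpose_of_trivial]
    exact hNpsd.conjTranspose_mul_mul_same V
  have hsplit := hARI V hV
  rw [hS] at hsplit
  simp only [Matrix.mul_add, Matrix.add_mul, Matrix.trace_add] at hsplit
  rw [hmid] at hsplit
  simp only [Matrix.mul_add, Matrix.add_mul, Matrix.trace_add]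
  linarith
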